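/- If E is similar to F and F is similar to G, with the witnessing modified histories obtained only by appending responses (no invocations removed), then E is similar to G; i.e., similarity restricted to response-appending witnesses is transitive. -/

import Mathlib

namespace RV

inductive Event where
  | inv (p : ℕ) (op : ℕ)
  | res (p : ℕ) (op : ℕ)
deriving DecidableEq

abbrev History := List Event

def Event.proc : Event → ℕ
  | .inv p _ => p
  | .res p _ => p

def Event.op : Event → ℕ
  | .inv _ o => o
  | .res _ o => o

def Event.isInv : Event → Bool
  | .inv _ _ => true
  | .res _ _ => false

/-- The subsequence of events of process `p`. -/
def proj (E : History) (p : ℕ) : History := E.filter (fun e => e.proc == p)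

/-- Two histories are equivalent if every process has the same subsequence of events. -/
def Equivalent (E F : History) : Prop := ∀ p, proj E p = proj F p

/-- Operation `a` precedes operation `b` in `E`: the response of `a` occurs
before the invocation of `b`. -/
def prec (E : History) (a b : ℕ) : Prop :=
  ∃ i j p q, i < j ∧ E[(i : ℕ)]? = some (Event.res p a) ∧ E[(j : ℕ)]? = some (Event.inv q b)

/-- A single process' subsequence alternates invocation, matching response, ... ,
possibly ending with a pending invocation. -/
inductive Alt : History → Prop where
  | nil : Alt []
  | pend (p o : ℕ) : Alt [Event.inv p o]
  | step (p o : ℕ) (l : History) : Alt l → Alt (Event.inv p o :: Event.res p o :: l)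

/-- Well-formed history: per-process alternation, and every operation identifier is
invoked at most once and responded at most once. -/
def WellFormed (E : History) : Prop :=
  (∀ p, Alt (proj E p)) ∧
  (∀ o, E.countP (fun e => e.isInv && e.op == o) ≤ 1) ∧
  (∀ o, E.countP (fun e => !e.isInv && e.op == o) ≤ 1)

def CompleteIn (E : History) (o : ℕ) : Prop :=
  (∃ p, Event.inv p o ∈ E) ∧ ∃ q, Event.res q o ∈ E

def PendingIn (E : History) (o : ℕ) : Prop :=
  (∃ p, Event.inv p o ∈ E) ∧ ∀ q, Event.res q o ∉ E

def hasRes (E : History) (o : ℕ) : Bool := E.any (fun e => !e.isInv && e.op == o)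

/-- `comp E` removes the invocations of pending operations. -/
def comp (E : History) : History := E.filter (fun e => !e.isInv || hasRes E e.op)

/-- `E'` extends `E` by appending responses to some pending operations. -/
def IsExtension (E E' : History) : Prop :=
  ∃ rs : History, E' = E ++ rs ∧
    (∀ e ∈ rs, e.isInv = false ∧ PendingIn E e.op ∧ Event.inv e.proc e.op ∈ E) ∧
    rs.Pairwise (fun a b => a.op ≠ b.op)

/-- Sequential histories: alternating invocation/matching-response pairs. -/
inductive Seq : History → Prop where
  | nil : Seq []
  | step (p o : ℕ) (l : History) : Seq l → Seq (Event.inv p o :: Event.res p o :: l)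

/-- `E` is linearizable w.r.t. the sequential object `O` (a set of sequential
histories): there is an extension `E'` of `E` and `S ∈ O` such that `comp E'`
and `S` are equivalent and `<_{comp E'} ⊆ <_S`. -/
def Linearizable (O : Set History) (E : History) : Prop :=
  ∃ E', IsExtension E E' ∧ ∃ S ∈ O, Equivalent (comp E') S ∧
    ∀ a b, prec (comp E') a b → prec S a b

/-- `E` is similar to `F`: some history `E'`, obtained from `E` by appending
responses to some pending operations and removing the invocations of some other
pending operations, is equivalent to `F` and satisfies `≺_{E'} ⊆ ≺_F`. -/
def Similar (E F : History) : Prop :=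
  ∃ (keep : Event → Bool) (rs : History),
    (∀ e ∈ E, keep e = false → e.isInv = true ∧ PendingIn E e.op) ∧
    (∀ e ∈ rs, e.isInv = false ∧ PendingIn E e.op ∧ Event.inv e.proc e.op ∈ E ∧
      keep (Event.inv e.proc e.op) = true) ∧
    rs.Pairwise (fun a b => a.op ≠ b.op) ∧
    Equivalent (E.filter keep ++ rs) F ∧
    (∀ a b, prec (E.filter keep ++ rs) a b → prec F a b)

/-- The class `GenLin`: sets of well-formed histories closed under prefixes and
under similarity. -/
def GenLin (O : Set History) : Prop :=
  (∀ F ∈ O, ∀ E : History, E <+: F → E ∈ O) ∧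
  (∀ F ∈ O, ∀ E : History, Similar E F → E ∈ O)

/-- Similarity where the witnessing modified history is obtained only by appending
responses to pending operations (no invocations removed). -/
def SimilarApp (E F : History) : Prop :=
  ∃ rs : History,
    (∀ e ∈ rs, e.isInv = false ∧ PendingIn E e.op ∧ Event.inv e.proc e.op ∈ E) ∧
    rs.Pairwise (fun a b => a.op ≠ b.op) ∧
    Equivalent (E ++ rs) F ∧
    (∀ a b, prec (E ++ rs) a b → prec F a b)

lemma mem_of_equiv {H K : History} (h : Equivalent H K) {e : Event} (he : e ∈ H) : e ∈ K := by
  have : e ∈ proj H e.proc := List.mem_filter.2 ⟨he, by simp⟩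
  rw [h e.proc] at this
  exact (List.mem_filter.1 this).1

lemma res_of_not_isInv {e : Event} (h : e.isInv = false) : e = Event.res e.proc e.op := by
  cases e with
  | inv p o => simp [Event.isInv] at h
  | res p o => rfl

lemma prec_prefix {A rs : History} {a b : ℕ} (h : prec A a b) : prec (A ++ rs) a b := by
  obtain ⟨i, j, p, q, hij, hi, hj⟩ := h
  refine ⟨i, j, p, q, hij, ?_, ?_⟩
  · rwa [List.getElem?_append_left (List.getElem?_eq_some_iff.1 hi).1]
  · rwa [List.getElem?_append_left (List.getElem?_eq_some_iff.1 hj).1]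

lemma prec_append_res {A rs : History} (hrs : ∀ e ∈ rs, e.isInv = false) {a b : ℕ}
    (h : prec (A ++ rs) a b) : prec A a b := by
  obtain ⟨i, j, p, q, hij, hi, hj⟩ := h
  have hjA : j < A.length := by
    by_contra hle
    push_neg at hle
    rw [List.getElem?_append_right hle] at hj
    have : Event.inv q b ∈ rs := List.mem_of_getElem? hj
    have := hrs _ this
    simp [Event.isInv] at this
  refine ⟨i, j, p, q, hij, ?_, ?_⟩
  · rwa [List.getElem?_append_left (lt_trans hij hjA)] at hi
  · rwa [List.getElem?_append_left hjA] at hj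

/-- Similarity restricted to response-appending witnesses is transitive. -/
theorem similarApp_trans (E F G : History)
    (hwfE : WellFormed E) (hwfF : WellFormed F) (hwfG : WellFormed G)
    (hEF : SimilarApp E F) (hFG : SimilarApp F G) : SimilarApp E G := by
  obtain ⟨rs₁, h1, hp1, heq1, hprec1⟩ := hEF
  obtain ⟨rs₂, h2, hp2, heq2, hprec2⟩ := hFG
  have heq1' : Equivalent F (E ++ rs₁) := fun p => (heq1 p).symm
  -- membership facts
  have hrs2E : ∀ e ∈ rs₂, e.isInv = false ∧ PendingIn E e.op ∧ Event.inv e.proc e.op ∈ E := by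
    intro e he
    obtain ⟨hni, hpF, hinvF⟩ := h2 e he
    have hinvE1 : Event.inv e.proc e.op ∈ E ++ rs₁ := by
      have := mem_of_equiv heq1' hinvF
      simpa [Event.proc] using this
    have hinvE : Event.inv e.proc e.op ∈ E := by
      rcases List.mem_append.1 hinvE1 with h | h
      · exact h
      · have := (h1 _ h).1
        simp [Event.isInv] at this
    refine ⟨hni, ⟨⟨e.proc, hinvE⟩, ?_⟩, hinvE⟩
    intro q hq
    exact hpF.2 q (mem_of_equiv heq1 (List.mem_append_left _ hq))
  refine ⟨rs₁ ++ rs₂, ?_, ?_, ?_, ?_⟩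
  · intro e he
    rcases List.mem_append.1 he with he | he
    · exact h1 e he
    · exact hrs2E e he
  · refine List.pairwise_append.2 ⟨hp1, hp2, ?_⟩
    intro x hx y hy
    have hxres : x = Event.res x.proc x.op := res_of_not_isInv (h1 x hx).1
    have hxF : x ∈ F := mem_of_equiv heq1 (List.mem_append_right _ hx)
    intro hxy
    have hyNoRes := (h2 y hy).2.1.2 x.proc
    rw [← hxy] at hyNoRes
    exact hyNoRes (hxres ▸ hxF)
  · intro p
    have h1p := heq1 p
    have h2p := heq2 p
    simp only [proj, List.filter_append] at *
    rw [← List.append_assoc, h1p, h2p]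
  · intro a b hpr
    rw [show E ++ (rs₁ ++ rs₂) = (E ++ rs₁) ++ rs₂ from (List.append_assoc _ _ _).symm] at hpr
    have hEr : prec (E ++ rs₁) a b := prec_append_res (fun e he => (hrs2E e he).1) hpr
    exact hprec2 a b (prec_prefix (hprec1 a b hEr))

end RV
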